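/- Loss-recovery invariant: in the recovery algorithm, for every core c and sequence i, once core c has processed any packet with sequence number j ≥ i, the log entry log[c][i] is no longer NOT_INIT: it is either history[i] (if sequence i's history was present in some packet received at c) or LOST. -/

import Mathlib

/-- A per-core log entry: uninitialized, marked lost, or holding history data. -/
inductive LogEntry (M : Type*) where
  | notInit : LogEntry M
  | lost : LogEntry M
  | data : M → LogEntry M

/-- Processing one received packet with sequence number `j` at a core whose log
is `s.1` and whose previous maximum sequence is `s.2`: for every `k` with
`s.2 < k ≤ j`, set `log[k] := LOST` if `k < max 1 (j+1-N)` (lost between the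
sequencer and the core) and `log[k] := history[k]` otherwise. -/
def procPacket {M : Type*} (N : ℕ) (history : ℕ → M) :
    (ℕ → LogEntry M) × ℕ → ℕ → (ℕ → LogEntry M) × ℕ :=
  fun s j =>
    (fun i =>
      if s.2 < i ∧ i ≤ j then
        if i < max 1 (j + 1 - N) then LogEntry.lost else LogEntry.data (history i)
      else s.1 i,
     max s.2 j)

theorem foldl_unchanged {M : Type*} (N : ℕ) (history : ℕ → M) :
    ∀ (js : List ℕ) (log : ℕ → LogEntry M) (m i : ℕ), i ≤ m →
      (js.foldl (procPacket N history) (log, m)).1 i = log i := by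
  intro js
  induction js with
  | nil => intro log m i h; rfl
  | cons j tl ih =>
    intro log m i h
    simp only [List.foldl_cons]
    rw [show procPacket N history (log, m) j =
      ((procPacket N history (log, m) j).1, max m j) from rfl]
    rw [ih _ (max m j) i (le_trans h (le_max_left m j))]
    simp only [procPacket]
    rw [if_neg (by omega)]

theorem foldl_char {M : Type*} (N : ℕ) (history : ℕ → M) :
    ∀ (js : List ℕ) (log : ℕ → LogEntry M) (m i : ℕ),
      js.Pairwise (· < ·) → (∀ j ∈ js, m < j) → 1 ≤ i → m < i →
      (∃ j ∈ js, i ≤ j) →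
      (js.foldl (procPacket N history) (log, m)).1 i =
        if ∃ j ∈ js, max 1 (j + 1 - N) ≤ i ∧ i ≤ j then LogEntry.data (history i)
        else LogEntry.lost := by
  intro js
  induction js with
  | nil => intro _ _ _ _ _ _ _ hcov; simp at hcov
  | cons j tl ih =>
    intro log m i hpw hmj hi hmi hcov
    have htl : ∀ j' ∈ tl, j < j' := fun j' hj' => (List.pairwise_cons.mp hpw).1 j' hj'
    simp only [List.foldl_cons]
    by_cases hij : i ≤ j
    · have : (procPacket N history (log, m) j) =
        ((procPacket N history (log, m) j).1, max m j) := rfl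
      rw [this, foldl_unchanged N history tl _ _ i (le_trans hij (le_max_right m j))]
      simp only [procPacket]
      rw [if_pos (show m < i ∧ i ≤ j from ⟨hmi, hij⟩)]
      by_cases hc : i < max 1 (j + 1 - N)
      · rw [if_pos hc, if_neg]
        rintro ⟨j', hj', h1, h2⟩
        rcases List.mem_cons.mp hj' with rfl | hj'
        · omega
        · have := htl j' hj'; omega
      · rw [if_neg hc, if_pos ⟨j, List.mem_cons_self, by omega, hij⟩]
    · push_neg at hij
      have hcov' : ∃ j' ∈ tl, i ≤ j' := by
        obtain ⟨j', hj', h⟩ := hcov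
        rcases List.mem_cons.mp hj' with rfl | hj'
        · omega
        · exact ⟨j', hj', h⟩
      have heq : (∃ j' ∈ j :: tl, max 1 (j' + 1 - N) ≤ i ∧ i ≤ j') ↔
          (∃ j' ∈ tl, max 1 (j' + 1 - N) ≤ i ∧ i ≤ j') := by
        constructor
        · rintro ⟨j', hj', h1, h2⟩
          rcases List.mem_cons.mp hj' with rfl | hj'
          · omega
          · exact ⟨j', hj', h1, h2⟩
        · rintro ⟨j', hj', h1, h2⟩
          exact ⟨j', List.mem_cons_of_mem _ hj', h1, h2⟩
      have : (procPacket N history (log, m) j) =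
        ((procPacket N history (log, m) j).1, max m j) := rfl
      rw [this, ih _ (max m j) i hpw.of_cons
        (fun j' hj' => by have := hmj j' (List.mem_cons_of_mem _ hj'); have := htl j' hj'; omega)
        hi (by omega) hcov']
      exact if_congr heq.symm rfl rfl

/-- Loss-recovery invariant: if core `c` has processed (in increasing order, no
reordering) the packets with sequence numbers `js`, then for every sequence
`i ≥ 1` such that some received packet has sequence number `j ≥ i`, the log
entry for `i` is no longer `NOT_INIT`: it is `history[i]` if sequence `i`'s
history was present in some packet received at `c`, and `LOST` otherwise. -/
theorem loss_recovery_log_invariant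
    {M : Type*} (N : ℕ) (hN : 1 ≤ N) (history : ℕ → M) (js : List ℕ)
    (hsorted : List.Chain' (· < ·) js) (hpos : ∀ j ∈ js, 1 ≤ j)
    (i : ℕ) (hi : 1 ≤ i) (hcov : ∃ j ∈ js, i ≤ j) :
    (js.foldl (procPacket N history) (fun _ => LogEntry.notInit, 0)).1 i ≠
        LogEntry.notInit ∧
    ((∃ j ∈ js, max 1 (j + 1 - N) ≤ i ∧ i ≤ j) →
      (js.foldl (procPacket N history) (fun _ => LogEntry.notInit, 0)).1 i =
        LogEntry.data (history i)) ∧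
    (¬ (∃ j ∈ js, max 1 (j + 1 - N) ≤ i ∧ i ≤ j) →
      (js.foldl (procPacket N history) (fun _ => LogEntry.notInit, 0)).1 i =
        LogEntry.lost) := by
  have hpw : js.Pairwise (· < ·) := List.isChain_iff_pairwise.mp hsorted
  have hkey := foldl_char N history js (fun _ => LogEntry.notInit) 0 i hpw
    (fun j hj => hpos j hj) hi hi hcov
  by_cases hc : ∃ j ∈ js, max 1 (j + 1 - N) ≤ i ∧ i ≤ j
  · rw [if_pos hc] at hkey
    exact ⟨by rw [hkey]; simp, fun _ => hkey, fun h => absurd hc h⟩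
  · rw [if_neg hc] at hkey
    exact ⟨by rw [hkey]; simp, fun h => absurd h hc, fun _ => hkey⟩
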